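/- arXiv:1707.04667 — 3 statements merged into one kernel-verified Lean document; each statement's English description precedes it below -/
import Mathlib

section
/- (Classical Yang–Baxter equation for the operators r_{i,k}.) For all distinct indices a, b, c in {1,…,n}, the operator identity [r_{a,b}, r_{a,c}]₊ + [r_{a,c}, r_{b,c}]₊ + [r_{a,b}, r_{b,c}]₊ = 0 holds on P⁻, where [p,q]₊ = pq + qp denotes the anticommutator. -/
noncomputable section

/-- The defining relations of the skew polynomial ring
`P⁻ = ℂ⟨x₁,…,xₙ⟩/⟨xᵢxⱼ + xⱼxᵢ : i ≠ j⟩`. -/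
inductive SkewRel (n : ℕ) : FreeAlgebra ℂ (Fin n) → FreeAlgebra ℂ (Fin n) → Prop
  | anticomm (i j : Fin n) (h : i ≠ j) :
      SkewRel n (FreeAlgebra.ι ℂ i * FreeAlgebra.ι ℂ j)
        (-(FreeAlgebra.ι ℂ j * FreeAlgebra.ι ℂ i))

/-- The skew polynomial ring `P⁻`. -/
abbrev SkewPoly (n : ℕ) := RingQuot (SkewRel n)

/-- The generators `xᵢ` of `P⁻`. -/
def X {n : ℕ} (i : Fin n) : SkewPoly n :=
  RingQuot.mkAlgHom ℂ (SkewRel n) (FreeAlgebra.ι ℂ i)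

/-- `f ∈ P⁻` is homogeneous of degree `d`: it lies in the span of the degree-`d` monomials. -/
def IsHomog {n : ℕ} (d : ℕ) (f : SkewPoly n) : Prop :=
  f ∈ Submodule.span ℂ
    {m : SkewPoly n | ∃ w : List (Fin n), w.length = d ∧ m = (w.map X).prod}

/-- The operator of left multiplication by `xᵢ` on `P⁻`. -/
def mulX {n : ℕ} (i : Fin n) : Module.End ℂ (SkewPoly n) :=
  LinearMap.mulLeft ℂ (X i)

/-- scalar value of `∂_{i,k}` on a generator -/
def eC {n : ℕ} (i k j : Fin n) : ℂ := if j = i ∨ j = k then 1 else 0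

lemma eC_comm {n : ℕ} (i k j : Fin n) : eC i k j = eC k i j := by
  unfold eC; exact if_congr or_comm rfl rfl

lemma eC_conj {n : ℕ} (i k i' k' j : Fin n) :
    eC i' k' (Equiv.swap i k j) = eC (Equiv.swap i k i') (Equiv.swap i k k') j := by
  unfold eC
  refine if_congr ?_ rfl rfl
  rw [Equiv.apply_eq_iff_eq_symm_apply, Equiv.apply_eq_iff_eq_symm_apply, Equiv.symm_swap]

lemma eC_swap_self {n : ℕ} (i k j : Fin n) : eC i k (Equiv.swap i k j) = eC i k j := by
  rw [eC_conj, Equiv.swap_apply_left, Equiv.swap_apply_right, ← eC_comm]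

lemma swap_conj_point {α : Type*} [DecidableEq α] (i k i' k' x : α) :
    Equiv.swap i' k' (Equiv.swap i k x)
      = Equiv.swap i k (Equiv.swap (Equiv.swap i k i') (Equiv.swap i k k') x) := by
  rw [Equiv.swap_apply_apply]
  simp [Equiv.Perm.mul_apply, Equiv.swap_inv, Equiv.swap_apply_self]

/-- monomials -/
def mono {n : ℕ} (w : List (Fin n)) : SkewPoly n := (w.map X).prod

lemma mono_nil {n : ℕ} : mono ([] : List (Fin n)) = 1 := rfl

lemma mono_cons {n : ℕ} (j : Fin n) (w : List (Fin n)) : mono (j :: w) = X j * mono w := by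
  simp [mono]

lemma mono_append {n : ℕ} (w₁ w₂ : List (Fin n)) : mono (w₁ ++ w₂) = mono w₁ * mono w₂ := by
  simp [mono]

lemma mem_span_mono {n : ℕ} (f : SkewPoly n) :
    f ∈ Submodule.span ℂ {m : SkewPoly n | ∃ w : List (Fin n), m = mono w} := by
  obtain ⟨y, rfl⟩ := RingQuot.mkAlgHom_surjective ℂ (SkewRel n) f
  induction y using FreeAlgebra.induction with
  | grade0 t =>
      rw [AlgHom.commutes, Algebra.algebraMap_eq_smul_one]
      exact Submodule.smul_mem _ _ (Submodule.subset_span ⟨[], rfl⟩)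
  | grade1 x => exact Submodule.subset_span ⟨[x], by simp [mono, X]⟩
  | add p q hp hq => rw [map_add]; exact Submodule.add_mem _ hp hq
  | mul p q hp hq =>
      rw [map_mul]
      have hle : Submodule.span ℂ {m : SkewPoly n | ∃ w : List (Fin n), m = mono w} *
          Submodule.span ℂ {m : SkewPoly n | ∃ w : List (Fin n), m = mono w} ≤
          Submodule.span ℂ {m : SkewPoly n | ∃ w : List (Fin n), m = mono w} := by
        rw [Submodule.span_mul_span]
        refine Submodule.span_le.2 ?_
        rintro z ⟨m₁, ⟨w₁, rfl⟩, m₂, ⟨w₂, rfl⟩, rfl⟩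
        exact Submodule.subset_span ⟨w₁ ++ w₂, (mono_append w₁ w₂).symm⟩
      exact hle (Submodule.mul_mem_mul hp hq)

lemma homog_one {n : ℕ} : IsHomog 0 (1 : SkewPoly n) :=
  Submodule.subset_span ⟨[], rfl, rfl⟩

lemma homog_X {n : ℕ} (j : Fin n) : IsHomog 1 (X j) :=
  Submodule.subset_span ⟨[j], rfl, by simp⟩

/-- The classical Yang–Baxter equation for the operators `r_{i,k}`:
`[r_{a,b}, r_{a,c}]₊ + [r_{a,c}, r_{b,c}]₊ + [r_{a,b}, r_{b,c}]₊ = 0` for distinct `a, b, c`. -/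
theorem stmt6 (n : ℕ) (hn : 2 ≤ n)
    -- `s i k` is the algebra automorphism of `P⁻` swapping `xᵢ` and `x_k`
    (s : Fin n → Fin n → (SkewPoly n →ₐ[ℂ] SkewPoly n))
    (hs : ∀ i k j : Fin n, i ≠ k → s i k (X j) = X (Equiv.swap i k j))
    -- `pd i k` is the odd divided difference operator `∂_{i,k}`
    (pd : Fin n → Fin n → Module.End ℂ (SkewPoly n))
    (hpdi : ∀ i k : Fin n, i ≠ k → pd i k (X i) = 1)
    (hpdk : ∀ i k : Fin n, i ≠ k → pd i k (X k) = 1)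
    (hpd0 : ∀ i k j : Fin n, i ≠ k → j ≠ i → j ≠ k → pd i k (X j) = 0)
    (hpdL : ∀ i k : Fin n, i ≠ k → ∀ (d : ℕ) (f g : SkewPoly n), IsHomog d f →
      pd i k (f * g) = pd i k f * g + (-1 : ℂ) ^ d • (s i k f * pd i k g))
    -- `r i k = ∂_{i,k} ∘ s_{i,k}`
    (r : Fin n → Fin n → Module.End ℂ (SkewPoly n))
    (hr : ∀ i k : Fin n, i ≠ k → r i k = pd i k ∘ₗ (s i k).toLinearMap)
    (a b c : Fin n) (hab : a ≠ b) (hac : a ≠ c) (hbc : b ≠ c) :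
    (r a b * r a c + r a c * r a b) + (r a c * r b c + r b c * r a c)
      + (r a b * r b c + r b c * r a b) = 0 := by
  have rap : ∀ i k : Fin n, i ≠ k → ∀ x, r i k x = pd i k (s i k x) := by
    intro i k hik x; rw [hr i k hik]; rfl
  have pdX : ∀ i k j : Fin n, i ≠ k → pd i k (X j) = eC i k j • (1 : SkewPoly n) := by
    intro i k j hik
    by_cases h1 : j = i
    · rw [h1, hpdi i k hik]; simp [eC]
    · by_cases h2 : j = k
      · rw [h2, hpdk i k hik]; simp [eC, h1]
      · rw [hpd0 i k j hik h1 h2]; simp [eC, h1, h2]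
  have pd_one : ∀ i k : Fin n, i ≠ k → pd i k (1 : SkewPoly n) = 0 := by
    intro i k hik
    have h := hpdL i k hik 0 1 1 homog_one
    simp only [mul_one, one_mul, pow_zero, one_smul, map_one] at h
    exact right_eq_add.mp h
  have pd_cons : ∀ i k : Fin n, i ≠ k → ∀ (j : Fin n) (g : SkewPoly n),
      pd i k (X j * g) = eC i k j • g - X (Equiv.swap i k j) * pd i k g := by
    intro i k hik j g
    rw [hpdL i k hik 1 (X j) g (homog_X j), pdX i k j hik, hs i k j hik,
      smul_mul_assoc, one_mul, pow_one]
    module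
  have r_one : ∀ i k : Fin n, i ≠ k → r i k (1 : SkewPoly n) = 0 := by
    intro i k hik; rw [rap i k hik, map_one, pd_one i k hik]
  have r_cons : ∀ i k : Fin n, i ≠ k → ∀ (j : Fin n) (g : SkewPoly n),
      r i k (X j * g) = eC i k j • s i k g - X j * r i k g := by
    intro i k hik j g
    rw [rap i k hik, map_mul, hs i k j hik, pd_cons i k hik, eC_swap_self,
      Equiv.swap_apply_self, ← rap i k hik]
  have s_mono : ∀ i k : Fin n, i ≠ k → ∀ w : List (Fin n),
      s i k (mono w) = mono (w.map (Equiv.swap i k)) := by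
    intro i k hik w
    induction w with
    | nil => simp [mono_nil]
    | cons j w ih => rw [mono_cons, map_mul, hs i k j hik, ih, List.map_cons, mono_cons]
  have s_s_mono : ∀ i k i' k' : Fin n, i ≠ k → i' ≠ k' → ∀ w : List (Fin n),
      s i' k' (s i k (mono w)) = s i k (s (Equiv.swap i k i') (Equiv.swap i k k') (mono w)) := by
    intro i k i' k' hik hik' w
    have h2 : Equiv.swap i k i' ≠ Equiv.swap i k k' := fun h => hik' ((Equiv.swap i k).injective h)
    rw [s_mono i k hik, s_mono i' k' hik', s_mono _ _ h2, s_mono i k hik,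
      List.map_map, List.map_map]
    congr 1
    refine List.map_congr_left fun x _ => ?_
    simp only [Function.comp_apply]
    exact swap_conj_point i k i' k' x
  have pd_symm : ∀ i k : Fin n, i ≠ k → ∀ w, pd i k (mono w) = pd k i (mono w) := by
    intro i k hik w
    induction w with
    | nil => rw [mono_nil, pd_one i k hik, pd_one k i hik.symm]
    | cons j w ih =>
        rw [mono_cons, pd_cons i k hik, pd_cons k i hik.symm, ih, eC_comm,
          Equiv.swap_comm]
  have r_symm : ∀ i k : Fin n, i ≠ k → ∀ w, r i k (mono w) = r k i (mono w) := by
    intro i k hik w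
    rw [rap i k hik, rap k i hik.symm, s_mono i k hik, s_mono k i hik.symm,
      Equiv.swap_comm i k]
    exact pd_symm i k hik _
  have r_s : ∀ i k i' k' : Fin n, i ≠ k → i' ≠ k' → ∀ w,
      r i' k' (s i k (mono w)) = s i k (r (Equiv.swap i k i') (Equiv.swap i k k') (mono w)) := by
    intro i k i' k' hik hik' w
    have h2 : Equiv.swap i k i' ≠ Equiv.swap i k k' := fun h => hik' ((Equiv.swap i k).injective h)
    induction w with
    | nil => rw [mono_nil, map_one, r_one i' k' hik', r_one _ _ h2, map_zero]
    | cons j w ih =>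
        rw [mono_cons, map_mul, hs i k j hik, r_cons i' k' hik', r_cons _ _ h2,
          map_sub, map_smul, map_mul, hs i k j hik, ih, eC_conj,
          s_s_mono i k i' k' hik hik' w]
  have rr_cons : ∀ i k i' k' : Fin n, i ≠ k → i' ≠ k' → ∀ (j : Fin n) (g : SkewPoly n),
      r i k (r i' k' (X j * g)) =
        eC i' k' j • r i k (s i' k' g) - eC i k j • s i k (r i' k' g)
          + X j * r i k (r i' k' g) := by
    intro i k i' k' hik hik' j g
    rw [r_cons i' k' hik', map_sub, map_smul, r_cons i k hik]
    abel
  have key : ∀ w : List (Fin n),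
      (r a b (r a c (mono w)) + r a c (r a b (mono w)))
        + (r a c (r b c (mono w)) + r b c (r a c (mono w)))
        + (r a b (r b c (mono w)) + r b c (r a b (mono w))) = 0 := by
    intro w
    induction w with
    | nil =>
        rw [mono_nil, r_one a c hac, r_one a b hab, r_one b c hbc]
        simp
    | cons j w ih =>
        have hcb : c ≠ b := hbc.symm
        have hba : b ≠ a := hab.symm
        have hca : c ≠ a := hac.symm
        have c1 : r a b (s a c (mono w)) = s a c (r b c (mono w)) := by
          have h := r_s a c a b hac hab w
          rw [Equiv.swap_apply_left, Equiv.swap_apply_of_ne_of_ne hba hbc,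
            r_symm c b hcb w] at h
          exact h
        have c2 : r a c (s a b (mono w)) = s a b (r b c (mono w)) := by
          have h := r_s a b a c hab hac w
          rw [Equiv.swap_apply_left, Equiv.swap_apply_of_ne_of_ne hca hcb] at h
          exact h
        have c3 : r a c (s b c (mono w)) = s b c (r a b (mono w)) := by
          have h := r_s b c a c hbc hac w
          rw [Equiv.swap_apply_of_ne_of_ne hab hac, Equiv.swap_apply_right] at h
          exact h
        have c4 : r b c (s a c (mono w)) = s a c (r a b (mono w)) := by
          have h := r_s a c b c hac hbc w
          rw [Equiv.swap_apply_of_ne_of_ne hba hbc, Equiv.swap_apply_right,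
            r_symm b a hba w] at h
          exact h
        have c5 : r a b (s b c (mono w)) = s b c (r a c (mono w)) := by
          have h := r_s b c a b hbc hab w
          rw [Equiv.swap_apply_of_ne_of_ne hab hac, Equiv.swap_apply_left] at h
          exact h
        have c6 : r b c (s a b (mono w)) = s a b (r a c (mono w)) := by
          have h := r_s a b b c hab hbc w
          rw [Equiv.swap_apply_right, Equiv.swap_apply_of_ne_of_ne hca hcb] at h
          exact h
        rw [mono_cons, rr_cons a b a c hab hac, rr_cons a c a b hac hab,
          rr_cons a c b c hac hbc, rr_cons b c a c hbc hac,
          rr_cons a b b c hab hbc, rr_cons b c a b hbc hab,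
          c1, c2, c3, c4, c5, c6]
        have hX : X j * ((r a b (r a c (mono w)) + r a c (r a b (mono w)))
            + (r a c (r b c (mono w)) + r b c (r a c (mono w)))
            + (r a b (r b c (mono w)) + r b c (r a b (mono w)))) = 0 := by
          rw [ih, mul_zero]
        simp only [mul_add] at hX
        rw [← hX]
        module
  refine LinearMap.ext fun f => ?_
  rw [LinearMap.zero_apply]
  have hf := mem_span_mono f
  induction hf using Submodule.span_induction with
  | mem x hx =>
      obtain ⟨w, rfl⟩ := hx
      simpa only [LinearMap.add_apply, Module.End.mul_apply] using key w
  | zero => exact map_zero _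
  | add x y hx hy ihx ihy => rw [map_add, ihx, ihy, add_zero]
  | smul t x hx ihx => rw [map_smul, ihx, smul_zero]
end
end

section
/- For all 1 ≤ i ≠ k ≤ n and all f ∈ P⁻, the commutator of r_{i,k} and τ_i satisfies (x_i² − x_k²)·(r_{i,k}(τ_i(f)) − τ_i(r_{i,k}(f))) = x_i·s_{i,k}(τ_i(f) + τ_k(f)) − x_k·s_{i,k}(τ_i(f) − τ_k(f)) − 2 x_i·f; equivalently, x_i^{−1}[r_{i,k}, τ_i] = (x_i² − x_k²)^{−1}(s_{i,k}(τ_i + τ_k) − x_i^{−1} x_k s_{i,k}(τ_i − τ_k) − 2). -/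
noncomputable section

/- ### Generic ring lemmas (proved over an arbitrary ring to avoid the
`RingQuot` instance diamonds, then instantiated at `SkewPoly`). -/

section Generic
variable {R : Type*} [Ring R]

lemma gen_neg_mul (x y : R) : -x * y = -(x * y) := by noncomm_ring

lemma gen_mul_one (x : R) : x * 1 = x := by noncomm_ring

lemma gen_swap (a b z : R) (h : a * b = -(b * a)) : a * (b * z) = -(b * (a * z)) := by
  linear_combination (norm := noncomm_ring) h * z

lemma gen_sq (a b : R) (h : a * b = -(b * a)) : a * (b * b) = b * b * a := by
  linear_combination (norm := noncomm_ring) h * b - b * h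

lemma gen_cen (a p q z : R) (h1 : a * (p * p) = p * p * a) (h2 : a * (q * q) = q * q * a) :
    (p ^ 2 - q ^ 2) * (a * z) = a * ((p ^ 2 - q ^ 2) * z) := by
  linear_combination (norm := noncomm_ring) z - z + h2 * z - h1 * z

lemma gen_zero (A B : R) :
    (A ^ 2 - B ^ 2) * ((0 : R) - 0) = A * (0 + 0) - B * (0 - 0) - 2 * (A * 0) := by
  noncomm_ring

lemma gen_one (A B : R) :
    (A ^ 2 - B ^ 2) * ((0 : R) - 0) = A * (1 + 1) - B * (1 - 1) - 2 * (A * 1) := by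
  noncomm_ring

lemma gen_add (A B a b rta tra rtb trb sta sua stb sub' : R)
    (ha : (A ^ 2 - B ^ 2) * (rta - tra)
      = A * (sta + sua) - B * (sta - sua) - 2 * (A * a))
    (hb : (A ^ 2 - B ^ 2) * (rtb - trb)
      = A * (stb + sub') - B * (stb - sub') - 2 * (A * b)) :
    (A ^ 2 - B ^ 2) * (rta + rtb - (tra + trb))
      = A * (sta + stb + (sua + sub')) - B * (sta + stb - (sua + sub')) - 2 * (A * (a + b)) := by
  linear_combination (norm := noncomm_ring) ha + hb

lemma gen_smul [Module ℂ R] [SMulCommClass ℂ R R] (A B a rta tra sta sua : R) (c : ℂ)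
    (h : (A ^ 2 - B ^ 2) * (rta - tra)
      = A * (sta + sua) - B * (sta - sua) - 2 * (A * a)) :
    (A ^ 2 - B ^ 2) * (c • rta - c • tra)
      = A * (c • sta + c • sua) - B * (c • sta - c • sua) - 2 * (A * (c • a)) := by
  have h2 : c • ((A ^ 2 - B ^ 2) * (rta - tra))
      = c • (A * (sta + sua) - B * (sta - sua) - 2 * (A * a)) := by rw [h]
  calc (A ^ 2 - B ^ 2) * (c • rta - c • tra)
      = c • ((A ^ 2 - B ^ 2) * (rta - tra)) := by
        rw [← smul_sub, mul_smul_comm]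
    _ = c • (A * (sta + sua) - B * (sta - sua) - 2 * (A * a)) := h2
    _ = A * (c • sta + c • sua) - B * (c • sta - c • sua) - 2 * (A * (c • a)) := by
        simp only [smul_sub, smul_add, mul_smul_comm, smul_smul]
        simp only [← smul_add, ← smul_sub, mul_smul_comm]

lemma gen_cancel [Module ℂ R] (x : R)
    (h : x = x + (-1 : ℂ) ^ 0 • ((1 : R) * x)) : x = 0 := by
  rw [pow_zero, one_smul, one_mul] at h
  exact (left_eq_add.mp h)

lemma gen_pdmul [Module ℂ R] (a b c : R) :
    a + (-1 : ℂ) ^ 1 • b = a - b := by module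

lemma gen_case1 (A B g stg sug rtg trg : R)
    (hg : (A ^ 2 - B ^ 2) * (rtg - trg)
      = A * (stg + sug) - B * (stg - sug) - 2 * (A * g))
    (hc : (A ^ 2 - B ^ 2) * (A * (rtg - trg)) = A * ((A ^ 2 - B ^ 2) * (rtg - trg))) :
    (A ^ 2 - B ^ 2) * (-(1 * stg - A * rtg) - (1 * sug - -(A * trg)))
      = A * (-(B * stg) + B * sug) - B * (-(B * stg) - B * sug) - 2 * (A * (A * g)) := by
  linear_combination (norm := noncomm_ring) hc + A * hg

lemma gen_case2 (A B g stg sug rtg trg : R)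
    (hg : (A ^ 2 - B ^ 2) * (rtg - trg)
      = A * (stg + sug) - B * (stg - sug) - 2 * (A * g))
    (hc : (A ^ 2 - B ^ 2) * (B * (rtg - trg)) = B * ((A ^ 2 - B ^ 2) * (rtg - trg)))
    (hsw : B * (A * g) = -(A * (B * g))) :
    (A ^ 2 - B ^ 2) * (1 * stg - B * rtg - (1 * sug - B * trg))
      = A * (A * stg + -(A * sug)) - B * (A * stg - -(A * sug)) - 2 * (A * (B * g)) := by
  linear_combination (norm := noncomm_ring) - hc - B * hg + 2 * hsw

lemma gen_case3 (A B y g stg sug rtg trg : R)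
    (hg : (A ^ 2 - B ^ 2) * (rtg - trg)
      = A * (stg + sug) - B * (stg - sug) - 2 * (A * g))
    (hc : (A ^ 2 - B ^ 2) * (y * (rtg - trg)) = y * ((A ^ 2 - B ^ 2) * (rtg - trg)))
    (hyA : y * A = -(A * y)) (hyB : y * B = -(B * y)) :
    (A ^ 2 - B ^ 2) * (0 * stg - y * rtg - (0 * sug - y * trg))
      = A * (y * stg + y * sug) - B * (y * stg - y * sug) - 2 * (A * (y * g)) := by
  linear_combination (norm := noncomm_ring)
    - hc - y * hg - hyA * (stg + sug) + hyB * (stg - sug) + 2 * (hyA * g)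

end Generic

/-- Induction principle for the skew polynomial ring. -/
lemma skew_induction {n : ℕ} {P : SkewPoly n → Prop}
    (h1 : ∀ c : ℂ, P (algebraMap ℂ (SkewPoly n) c))
    (hX : ∀ j : Fin n, P (X j))
    (hmul : ∀ a b, P a → P b → P (a * b))
    (hadd : ∀ a b, P a → P b → P (a + b)) :
    ∀ f : SkewPoly n, P f := by
  intro f
  obtain ⟨a, rfl⟩ := RingQuot.mkAlgHom_surjective ℂ (SkewRel n) f
  induction a using FreeAlgebra.induction with
  | grade0 c => rw [AlgHom.commutes]; exact h1 c
  | grade1 j => exact hX j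
  | mul a b ha hb => rw [map_mul]; exact hmul _ _ ha hb
  | add a b ha hb => rw [map_add]; exact hadd _ _ ha hb

/-- `P⁻` is spanned by the monomials in the generators. -/
lemma skew_span_top {n : ℕ} (f : SkewPoly n) :
    f ∈ Submodule.span ℂ {m : SkewPoly n | ∃ w : List (Fin n), m = (w.map X).prod} := by
  refine skew_induction ?_ ?_ ?_ ?_ f
  · intro c
    have h1 : (1 : SkewPoly n) ∈ {m : SkewPoly n | ∃ w : List (Fin n), m = (w.map X).prod} :=
      ⟨[], by simp⟩
    rw [Algebra.algebraMap_eq_smul_one]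
    exact Submodule.smul_mem _ _ (Submodule.subset_span h1)
  · intro j
    exact Submodule.subset_span ⟨[j], by simp⟩
  · intro a b ha hb
    refine Submodule.span_induction ?_ ?_ ?_ ?_ ha
    · rintro x ⟨w, rfl⟩
      refine Submodule.span_induction ?_ ?_ ?_ ?_ hb
      · rintro y ⟨v, rfl⟩
        exact Submodule.subset_span ⟨w ++ v, by simp⟩
      · rw [mul_zero]; exact Submodule.zero_mem _
      · intro y z _ _ hy hz; rw [mul_add]; exact Submodule.add_mem _ hy hz
      · intro c y _ hy; rw [mul_smul_comm]; exact Submodule.smul_mem _ _ hy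
    · rw [zero_mul]; exact Submodule.zero_mem _
    · intro x y _ _ hx hy; rw [add_mul]; exact Submodule.add_mem _ hx hy
    · intro c x _ hx; rw [smul_mul_assoc]; exact Submodule.smul_mem _ _ hx
  · intro a b ha hb; exact Submodule.add_mem _ ha hb

/-- The commutator of `r_{i,k}` and `τᵢ`:
`(xᵢ² − x_k²)·(r_{i,k}(τᵢf) − τᵢ(r_{i,k}f))
  = xᵢ·s_{i,k}(τᵢf + τ_kf) − x_k·s_{i,k}(τᵢf − τ_kf) − 2xᵢ·f`. -/
theorem stmt8 (n : ℕ) (hn : 2 ≤ n)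
    -- `s i k` is the algebra automorphism of `P⁻` swapping `xᵢ` and `x_k`
    (s : Fin n → Fin n → (SkewPoly n →ₐ[ℂ] SkewPoly n))
    (hs : ∀ i k j : Fin n, i ≠ k → s i k (X j) = X (Equiv.swap i k j))
    -- `τ i` is the algebra automorphism of `P⁻` sending `xᵢ` to `-xᵢ` and fixing the others
    (τ : Fin n → (SkewPoly n →ₐ[ℂ] SkewPoly n))
    (hτ : ∀ i j : Fin n, τ i (X j) = if j = i then -X j else X j)
    -- `pd i k` is the odd divided difference operator `∂_{i,k}`
    (pd : Fin n → Fin n → Module.End ℂ (SkewPoly n))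
    (hpdi : ∀ i k : Fin n, i ≠ k → pd i k (X i) = 1)
    (hpdk : ∀ i k : Fin n, i ≠ k → pd i k (X k) = 1)
    (hpd0 : ∀ i k j : Fin n, i ≠ k → j ≠ i → j ≠ k → pd i k (X j) = 0)
    (hpdL : ∀ i k : Fin n, i ≠ k → ∀ (d : ℕ) (f g : SkewPoly n), IsHomog d f →
      pd i k (f * g) = pd i k f * g + (-1 : ℂ) ^ d • (s i k f * pd i k g))
    -- `r i k = ∂_{i,k} ∘ s_{i,k}`
    (r : Fin n → Fin n → Module.End ℂ (SkewPoly n))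
    (hr : ∀ i k : Fin n, i ≠ k → r i k = pd i k ∘ₗ (s i k).toLinearMap)
    (i k : Fin n) (hik : i ≠ k) (f : SkewPoly n) :
    (X i ^ 2 - X k ^ 2) * (r i k (τ i f) - τ i (r i k f))
      = X i * s i k (τ i f + τ k f) - X k * s i k (τ i f - τ k f) - 2 * (X i * f) := by
  -- SkewPoly-specialized ring facts
  have nm : ∀ x y : SkewPoly n, -x * y = -(x * y) := fun x y => gen_neg_mul x y
  have m1 : ∀ x : SkewPoly n, x * 1 = x := fun x => gen_mul_one x
  -- basic facts about the algebra maps on generators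
  have hsX : ∀ j, s i k (X j) = X (Equiv.swap i k j) := fun j => hs i k j hik
  have hsA : s i k (X i) = X k := by rw [hsX, Equiv.swap_apply_left]
  have hsB : s i k (X k) = X i := by rw [hsX, Equiv.swap_apply_right]
  have hsj : ∀ j, j ≠ i → j ≠ k → s i k (X j) = X j := by
    intro j h1 h2; rw [hsX, Equiv.swap_apply_of_ne_of_ne h1 h2]
  have htA : τ i (X i) = -X i := by rw [hτ]; simp
  have htj : ∀ j, j ≠ i → τ i (X j) = X j := by intro j h; rw [hτ]; simp [h]
  have huB : τ k (X k) = -X k := by rw [hτ]; simp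
  have huj : ∀ j, j ≠ k → τ k (X j) = X j := by intro j h; rw [hτ]; simp [h]
  -- τᵢ ∘ s = s ∘ τ_k
  have hts : ∀ g, τ i (s i k g) = s i k (τ k g) := by
    refine skew_induction ?_ ?_ ?_ ?_
    · intro c; simp only [AlgHom.commutes]
    · intro j
      by_cases h1 : j = i
      · subst h1; rw [hsA, htj k (Ne.symm hik), huj j hik, hsA]
      · by_cases h2 : j = k
        · subst h2; rw [hsB, htA, huB, map_neg, hsB]
        · rw [hsj j h1 h2, htj j h1, huj j h2, hsj j h1 h2]
    · intro a b ha hb; simp only [map_mul, ha, hb]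
    · intro a b ha hb; simp only [map_add, ha, hb]
  -- homogeneity facts and the basic Leibniz consequences
  have h0homog : IsHomog 0 (1 : SkewPoly n) := Submodule.subset_span ⟨[], by simp⟩
  have h1homog : ∀ j : Fin n, IsHomog 1 (X j) := fun j => Submodule.subset_span ⟨[j], by simp⟩
  have hpd1 : pd i k (1 : SkewPoly n) = 0 := by
    have h := hpdL i k hik 0 1 1 h0homog
    rw [m1, m1, map_one (s i k)] at h
    exact gen_cancel _ h
  have hpdmul : ∀ (j : Fin n) g, pd i k (X j * g)
      = pd i k (X j) * g - X (Equiv.swap i k j) * pd i k g := by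
    intro j g
    rw [hpdL i k hik 1 (X j) g (h1homog j), hsX]
    exact gen_pdmul _ _ 0
  have hrapp : ∀ g, r i k g = pd i k (s i k g) := by
    intro g; rw [hr i k hik]; rfl
  have hrmul : ∀ (j : Fin n) g, r i k (X j * g)
      = pd i k (X (Equiv.swap i k j)) * s i k g - X j * r i k g := by
    intro j g
    rw [hrapp, map_mul, hsX, hpdmul, Equiv.swap_apply_self, hrapp]
  have hr1 : r i k (1 : SkewPoly n) = 0 := by rw [hrapp, map_one (s i k), hpd1]
  -- anticommutation facts
  have hanti : ∀ a b : Fin n, a ≠ b → X a * X b = -(X b * X a) := by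
    intro a b h
    have h2 := RingQuot.mkAlgHom_rel ℂ (SkewRel.anticomm a b h)
    simpa only [map_mul, map_neg, X] using h2
  have hswap : ∀ (a b : Fin n), a ≠ b → ∀ z : SkewPoly n,
      X a * (X b * z) = -(X b * (X a * z)) :=
    fun a b h z => gen_swap _ _ _ (hanti a b h)
  have hsq : ∀ (a b : Fin n), X a * (X b * X b) = X b * X b * X a := by
    intro a b
    by_cases h : a = b
    · subst h; rw [mul_assoc]
    · exact gen_sq _ _ (hanti a b h)
  have hcen : ∀ (a : Fin n) (z : SkewPoly n),
      (X i ^ 2 - X k ^ 2) * (X a * z) = X a * ((X i ^ 2 - X k ^ 2) * z) :=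
    fun a z => gen_cen _ _ _ _ (hsq a i) (hsq a k)
  -- the main statement, in expanded form
  suffices H : ∀ f : SkewPoly n,
      (X i ^ 2 - X k ^ 2) * (r i k (τ i f) - τ i (r i k f))
        = X i * (s i k (τ i f) + s i k (τ k f)) - X k * (s i k (τ i f) - s i k (τ k f))
          - 2 * (X i * f) by
    rw [map_add, map_sub]; exact H f
  -- key induction step: multiply a solution on the left by a generator
  have key : ∀ g : SkewPoly n,
      (X i ^ 2 - X k ^ 2) * (r i k (τ i g) - τ i (r i k g))
        = X i * (s i k (τ i g) + s i k (τ k g)) - X k * (s i k (τ i g) - s i k (τ k g))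
          - 2 * (X i * g) →
      ∀ j : Fin n,
      (X i ^ 2 - X k ^ 2) * (r i k (τ i (X j * g)) - τ i (r i k (X j * g)))
        = X i * (s i k (τ i (X j * g)) + s i k (τ k (X j * g)))
          - X k * (s i k (τ i (X j * g)) - s i k (τ k (X j * g))) - 2 * (X i * (X j * g)) := by
    intro g hg j
    by_cases hji : j = i
    · simp only [hji, map_mul, htA, huj i hik, nm, map_neg, map_sub, map_one, map_zero, hts,
        hsA, hrmul, Equiv.swap_apply_left, hpdk i k hik]
      exact gen_case1 _ _ _ _ _ _ _ hg (hcen i _)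
    · by_cases hjk : j = k
      · simp only [hjk, map_mul, htj k (Ne.symm hik), huB, nm, map_neg, map_sub, map_one,
          map_zero, hts, hsB, hrmul, Equiv.swap_apply_right, hpdi i k hik]
        exact gen_case2 _ _ _ _ _ _ _ hg (hcen k _) (hswap k i (Ne.symm hik) g)
      · simp only [map_mul, htj j hji, huj j hjk, nm, map_neg, map_sub, map_one, map_zero,
          hts, hsj j hji hjk, hrmul, Equiv.swap_apply_of_ne_of_ne hji hjk,
          hpd0 i k j hik hji hjk]
        exact gen_case3 _ _ _ _ _ _ _ _ hg (hcen j _) (hanti j i hji) (hanti j k hjk)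
  -- now prove H by induction over the span of monomials
  intro f
  have hf := skew_span_top f
  refine Submodule.span_induction ?_ ?_ ?_ ?_ hf
  · rintro x ⟨w, rfl⟩
    induction w with
    | nil =>
      simp only [List.map_nil, List.prod_nil, map_one, hr1, map_zero]
      exact gen_one (X i) (X k)
    | cons j w ih =>
      rw [List.map_cons, List.prod_cons]
      exact key _ ih j
  · simp only [map_zero]
    exact gen_zero (X i) (X k)
  · intro a b _ _ ha hb
    simp only [map_add]
    exact gen_add _ _ _ _ _ _ _ _ _ _ _ _ ha hb
  · intro c a _ ha
    simp only [map_smul]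
    exact gen_smul _ _ _ _ _ _ _ c ha
end
end

section
/- For each 1 ≤ i ≤ n, the operator identity x_i D_i + D_i x_i = 2t·x_i p_i + t + u Σ_{k ≠ i} s_{i,k} holds on P⁻. -/
noncomputable section

/-- Auxiliary: ordered monomials. -/
def Mo {n : ℕ} (lam : Fin n → ℕ) : SkewPoly n :=
  ((List.finRange n).map fun j => X j ^ lam j).prod

lemma anticommX {n : ℕ} {i j : Fin n} (h : i ≠ j) : X i * X j = -(X j * X i) := by
  have := RingQuot.mkAlgHom_rel ℂ (SkewRel.anticomm i j h)
  simpa [X, map_mul, map_neg] using this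

lemma anticommX' {n : ℕ} {i j : Fin n} (h : i ≠ j) :
    X i * X j = (-1 : ℂ) • (X j * X i) :=
  (anticommX h).trans (neg_one_smul ℂ _).symm

lemma comm_powX {n : ℕ} {i j : Fin n} (h : i ≠ j) (m : ℕ) :
    X i * X j ^ m = ((-1 : ℂ) ^ m) • (X j ^ m * X i) := by
  induction m with
  | zero => simp
  | succ m ih =>
    rw [pow_succ, ← mul_assoc, ih, smul_mul_assoc, mul_assoc, anticommX' h,
      mul_smul_comm, smul_smul, ← pow_succ, ← mul_assoc]

lemma sorted_key {n : ℕ} (i : Fin n) (lam : Fin n → ℕ) :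
    ∀ l : List (Fin n), l.Pairwise (· < ·) → i ∈ l →
      X i * (l.map fun j => X j ^ lam j).prod
        = ((-1 : ℂ) ^ ((l.filter fun j => j < i).map lam).sum) •
            (l.map fun j => X j ^ (Function.update lam i (lam i + 1)) j).prod := by
  intro l
  induction l with
  | nil => intro _ h; simp at h
  | cons a l ih =>
    intro hs hi
    rw [List.pairwise_cons] at hs
    obtain ⟨ha, hl⟩ := hs
    rcases List.mem_cons.mp hi with rfl | hi'
    · have hnot : ∀ b ∈ l, b ≠ i := fun b hb => (ha b hb).ne'
      have hfilt : ((i :: l).filter fun j => j < i) = [] := by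
        rw [List.filter_cons_of_neg (by simp), List.filter_eq_nil_iff]
        intro b hb
        simp only [decide_eq_true_eq]
        exact not_lt.mpr (ha b hb).le
      rw [hfilt]
      simp only [List.map_nil, List.sum_nil, pow_zero, one_smul, List.map_cons,
        List.prod_cons, ← mul_assoc]
      rw [Function.update_self, ← pow_succ']
      have hmap : (List.map (fun j => X j ^ lam j) l)
          = List.map (fun j => X j ^ Function.update lam i (lam i + 1) j) l :=
        List.map_congr_left fun b hb => by rw [Function.update_of_ne (hnot b hb)]
      rw [hmap]
    · have hai : a < i := ha i hi'
      have hane : a ≠ i := hai.ne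
      have hfilt : ((a :: l).filter fun j => j < i)
          = a :: (l.filter fun j => j < i) := by
        rw [List.filter_cons]
        simp [hai]
      rw [hfilt]
      simp only [List.map_cons, List.prod_cons, List.sum_cons, ← mul_assoc]
      rw [comm_powX hane.symm (lam a), smul_mul_assoc, mul_assoc, ih hl hi',
        Function.update_of_ne hane]
      rw [mul_smul_comm, smul_smul, ← pow_add]

lemma key {n : ℕ} (i : Fin n) (lam : Fin n → ℕ) :
    X i * Mo lam
      = ((-1 : ℂ) ^ (∑ j ∈ Finset.Iio i, lam j)) • Mo (Function.update lam i (lam i + 1)) := by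
  have hsort : (List.finRange n).Pairwise (· < ·) := List.pairwise_lt_finRange n
  have h := sorted_key i lam (List.finRange n) hsort (List.mem_finRange i)
  have hsum : (((List.finRange n).filter fun j => j < i).map lam).sum
      = ∑ j ∈ Finset.Iio i, lam j := by
    rw [← List.sum_toFinset lam (((List.nodup_finRange n).filter _))]
    congr 1
    ext j
    simp
  rw [Mo, h, hsum]
  rfl

lemma Mo_zero {n : ℕ} : Mo (fun _ => 0 : Fin n → ℕ) = 1 := by
  simp [Mo]

lemma span_Mo_top (n : ℕ) :
    Submodule.span ℂ (Set.range (Mo (n := n))) = ⊤ := by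
  set S := Submodule.span ℂ (Set.range (Mo (n := n))) with hS
  have h1 : (1 : SkewPoly n) ∈ S := by
    rw [← Mo_zero]
    exact Submodule.subset_span ⟨_, rfl⟩
  have hX : ∀ i : Fin n, ∀ x ∈ S, X i * x ∈ S := by
    intro i x hx
    induction hx using Submodule.span_induction with
    | mem x hx =>
      obtain ⟨lam, rfl⟩ := hx
      rw [key]
      exact Submodule.smul_mem _ _ (Submodule.subset_span ⟨_, rfl⟩)
    | zero => simp
    | add a b _ _ ha hb => rw [mul_add]; exact add_mem ha hb
    | smul c a _ ha => rw [mul_smul_comm]; exact Submodule.smul_mem _ _ ha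
  have hadj : ∀ a : SkewPoly n, ∀ x ∈ S, a * x ∈ S := by
    intro a
    have htop : Algebra.adjoin ℂ (Set.range (X (n := n))) = ⊤ := by
      have : Set.range (X (n := n))
          = (RingQuot.mkAlgHom ℂ (SkewRel n)) '' Set.range (FreeAlgebra.ι ℂ) := by
        rw [← Set.range_comp]; rfl
      rw [this, ← AlgHom.map_adjoin, FreeAlgebra.adjoin_range_ι, Algebra.map_top]
      rw [AlgHom.range_eq_top]
      exact RingQuot.mkAlgHom_surjective ℂ _
    have ha : a ∈ Algebra.adjoin ℂ (Set.range (X (n := n))) := htop ▸ trivial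
    induction ha using Algebra.adjoin_induction with
    | mem b hb =>
      obtain ⟨j, rfl⟩ := hb
      exact hX j
    | algebraMap c =>
      intro x hx
      rw [← Algebra.smul_def]
      exact Submodule.smul_mem _ _ hx
    | add b c _ _ hb hc =>
      intro x hx
      rw [add_mul]
      exact add_mem (hb x hx) (hc x hx)
    | mul b c _ _ hb hc =>
      intro x hx
      rw [mul_assoc]
      exact hb _ (hc x hx)
  rw [eq_top_iff]
  intro a _
  simpa using hadj a 1 h1

/-- For each `i`, the operator identity `xᵢ Dᵢ + Dᵢ xᵢ = 2t·xᵢpᵢ + t + u Σ_{k ≠ i} s_{i,k}`. -/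
theorem stmt14 (n : ℕ) (hn : 2 ≤ n)
    -- `s i k` is the algebra automorphism of `P⁻` swapping `xᵢ` and `x_k`
    (s : Fin n → Fin n → (SkewPoly n →ₐ[ℂ] SkewPoly n))
    (hs : ∀ i k j : Fin n, i ≠ k → s i k (X j) = X (Equiv.swap i k j))
    -- `τ i` is the algebra automorphism of `P⁻` sending `xᵢ` to `-xᵢ` and fixing the others
    (τ : Fin n → (SkewPoly n →ₐ[ℂ] SkewPoly n))
    (hτ : ∀ i j : Fin n, τ i (X j) = if j = i then -X j else X j)
    -- `pd i k` is the odd divided difference operator `∂_{i,k}`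
    (pd : Fin n → Fin n → Module.End ℂ (SkewPoly n))
    (hpdi : ∀ i k : Fin n, i ≠ k → pd i k (X i) = 1)
    (hpdk : ∀ i k : Fin n, i ≠ k → pd i k (X k) = 1)
    (hpd0 : ∀ i k j : Fin n, i ≠ k → j ≠ i → j ≠ k → pd i k (X j) = 0)
    (hpdL : ∀ i k : Fin n, i ≠ k → ∀ (d : ℕ) (f g : SkewPoly n), IsHomog d f →
      pd i k (f * g) = pd i k f * g + (-1 : ℂ) ^ d • (s i k f * pd i k g))
    -- `r i k = ∂_{i,k} ∘ s_{i,k}`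
    (r : Fin n → Fin n → Module.End ℂ (SkewPoly n))
    (hr : ∀ i k : Fin n, i ≠ k → r i k = pd i k ∘ₗ (s i k).toLinearMap)
    -- `p i` is the operator `pᵢ`, defined on the monomial basis
    (p : Fin n → Module.End ℂ (SkewPoly n))
    (hp : ∀ (i : Fin n) (lam : Fin n → ℕ),
      p i (((List.finRange n).map fun j => X j ^ lam j).prod)
        = ((lam i : ℂ) * (-1 : ℂ) ^ (∑ j ∈ Finset.Iio i, lam j)) •
            ((List.finRange n).map fun j => X j ^ (Function.update lam i (lam i - 1)) j).prod)
    (t u : ℂ)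
    (D : Fin n → Module.End ℂ (SkewPoly n))
    (hD : ∀ i : Fin n, D i = t • p i + u • ∑ k ∈ Finset.univ \ {i}, r i k)
    (i : Fin n) :
    mulX i * D i + D i * mulX i
      = (2 * t) • (mulX i * p i) + t • (1 : Module.End ℂ (SkewPoly n))
        + u • ∑ k ∈ Finset.univ \ {i}, (s i k).toLinearMap := by

  classical
  have hp' : ∀ lam : Fin n → ℕ, p i (Mo lam)
      = ((lam i : ℂ) * (-1 : ℂ) ^ (∑ j ∈ Finset.Iio i, lam j)) •
          Mo (Function.update lam i (lam i - 1)) := fun lam => hp i lam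
  -- Part A : p i * mulX i = mulX i * p i + 1
  have hA : p i * mulX i = mulX i * p i + 1 := by
    apply LinearMap.ext_on (span_Mo_top n)
    rintro _ ⟨lam, rfl⟩
    have hS1 : ∀ v : ℕ, ∑ j ∈ Finset.Iio i, Function.update lam i v j
        = ∑ j ∈ Finset.Iio i, lam j := fun v =>
      Finset.sum_congr rfl fun j hj =>
        Function.update_of_ne (Finset.mem_Iio.mp hj).ne v lam
    have hsq : ((-1 : ℂ) ^ (∑ j ∈ Finset.Iio i, lam j))
        * ((-1 : ℂ) ^ (∑ j ∈ Finset.Iio i, lam j)) = 1 := by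
      rw [← pow_add]
      exact Even.neg_one_pow ⟨_, rfl⟩
    have hL : p i (X i * Mo lam) = ((lam i : ℂ) + 1) • Mo lam := by
      rw [key, map_smul, hp', hS1, Function.update_self,
        Function.update_idem, Nat.add_sub_cancel, Function.update_eq_self,
        smul_smul]
      congr 1
      push_cast
      linear_combination ((lam i : ℂ) + 1) * hsq
    have hR : X i * p i (Mo lam) = (lam i : ℂ) • Mo lam := by
      rw [hp', mul_smul_comm, key, hS1, Function.update_self,
        Function.update_idem, smul_smul]
      rcases Nat.eq_zero_or_pos (lam i) with h0 | h0
      · simp [h0]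
      · rw [Nat.sub_add_cancel h0, Function.update_eq_self]
        congr 1
        linear_combination (lam i : ℂ) * hsq
    simp only [Module.End.mul_apply, LinearMap.add_apply, Module.End.one_apply,
      mulX, LinearMap.mulLeft_apply]
    rw [hL, hR, add_smul, one_smul]
  -- Part B : for k ≠ i, mulX i * r i k + r i k * mulX i = s i k
  have hB : ∀ k ∈ Finset.univ \ ({i} : Finset (Fin n)),
      mulX i * r i k + r i k * mulX i = (s i k).toLinearMap := by
    intro k hk
    have hki : k ≠ i := by simpa using (Finset.mem_sdiff.mp hk).2
    have hik : i ≠ k := hki.symm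
    apply LinearMap.ext
    intro f
    simp only [LinearMap.add_apply, Module.End.mul_apply, AlgHom.toLinearMap_apply,
      mulX, LinearMap.mulLeft_apply, hr i k hik, LinearMap.coe_comp,
      Function.comp_apply]
    rw [map_mul, hs i k i hik, Equiv.swap_apply_left]
    have hhom : IsHomog 1 (X k) := Submodule.subset_span ⟨[k], rfl, by simp⟩
    rw [hpdL i k hik 1 (X k) (s i k f) hhom, hpdk i k hik, hs i k k hik,
      Equiv.swap_apply_right, one_mul, pow_one]
    module
  -- Assembly
  have hSum : (∑ k ∈ Finset.univ \ ({i} : Finset (Fin n)), (mulX i * r i k))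
      + (∑ k ∈ Finset.univ \ ({i} : Finset (Fin n)), (r i k * mulX i))
      = ∑ k ∈ Finset.univ \ ({i} : Finset (Fin n)), (s i k).toLinearMap := by
    rw [← Finset.sum_add_distrib]
    exact Finset.sum_congr rfl hB
  rw [hD i, mul_add, add_mul, mul_smul_comm, mul_smul_comm, smul_mul_assoc,
    smul_mul_assoc, hA, Finset.mul_sum, Finset.sum_mul, ← hSum]
  module
end
end
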